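/- Let D ⊂ ℂⁿ be a bounded open set with defining function ρ : ℂⁿ → ℝ of class C², D = {ρ < 0} and ∇ρ(w) ≠ 0 for every w ∈ bD. If D is strongly ℂ-linearly convex, i.e. there is c > 0 such that |⟨∂ρ(w), w − z⟩| ≥ c |w − z|² for all w ∈ bD and all z in the closure of D, then D is strongly pseudoconvex: for every w ∈ bD and every v ∈ ℂⁿ with v ≠ 0 and ⟨∂ρ(w), v⟩ = 0, the Levi form satisfies L_ρ(w; v) > 0. -/

import Mathlib

open MeasureTheory Complex

noncomputable section

instance (n : ℕ) : MeasurableSpace (EuclideanSpace ℂ (Fin n)) := borel _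
instance (n : ℕ) : BorelSpace (EuclideanSpace ℂ (Fin n)) := ⟨rfl⟩

/-- The Wirtinger derivative ∂ρ/∂w_j. -/
def wd {n : ℕ} (ρ : EuclideanSpace ℂ (Fin n) → ℝ) (w : EuclideanSpace ℂ (Fin n)) (j : Fin n) : ℂ :=
  (1 / 2 : ℂ) * ((fderiv ℝ ρ w (EuclideanSpace.single j 1) : ℂ)
    - Complex.I * (fderiv ℝ ρ w (EuclideanSpace.single j Complex.I) : ℂ))

/-- ⟨∂ρ(w), u⟩ = ∑ ∂ρ/∂w_j (w) u_j. -/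
def wpair {n : ℕ} (ρ : EuclideanSpace ℂ (Fin n) → ℝ) (w u : EuclideanSpace ℂ (Fin n)) : ℂ :=
  ∑ j, wd ρ w j * u j

/-- Iterated real directional derivative ∂_b ∂_a ρ (w). -/
def d2 {n : ℕ} (ρ : EuclideanSpace ℂ (Fin n) → ℝ) (w a b : EuclideanSpace ℂ (Fin n)) : ℝ :=
  fderiv ℝ (fun x => fderiv ℝ ρ x a) w b

/-- The coefficient ∂²ρ/∂w_j∂w̄_k (w) of the Levi form. -/
def leviCoef {n : ℕ} (ρ : EuclideanSpace ℂ (Fin n) → ℝ) (w : EuclideanSpace ℂ (Fin n))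
    (j k : Fin n) : ℂ :=
  (1 / 4 : ℂ) *
    (((d2 ρ w (EuclideanSpace.single j 1) (EuclideanSpace.single k 1)
        + d2 ρ w (EuclideanSpace.single j Complex.I) (EuclideanSpace.single k Complex.I) : ℝ) : ℂ)
      + Complex.I *
        ((d2 ρ w (EuclideanSpace.single j 1) (EuclideanSpace.single k Complex.I)
          - d2 ρ w (EuclideanSpace.single j Complex.I) (EuclideanSpace.single k 1) : ℝ) : ℂ))

/-- The Levi form L_ρ(w; v). -/
def levi {n : ℕ} (ρ : EuclideanSpace ℂ (Fin n) → ℝ) (w v : EuclideanSpace ℂ (Fin n)) : ℝ :=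
  ∑ j, ∑ k, (leviCoef ρ w j k * v j * (starRingEnd ℂ) (v k)).re

lemma decomp {n : ℕ} (u : EuclideanSpace ℂ (Fin n)) :
    u = ∑ j, ((u j).re • EuclideanSpace.single j (1:ℂ) + (u j).im • EuclideanSpace.single j (I:ℂ)) := by
  ext k
  rw [WithLp.ofLp_sum, Finset.sum_apply]
  simp [EuclideanSpace.single_apply, Complex.real_smul]
  rw [Finset.sum_add_distrib, Finset.sum_ite_eq Finset.univ k, Finset.sum_ite_eq Finset.univ k]
  simp [Complex.re_add_im]

lemma d2_eq {n : ℕ} {ρ : EuclideanSpace ℂ (Fin n) → ℝ}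
    {w : EuclideanSpace ℂ (Fin n)}
    (hF : DifferentiableAt ℝ (fderiv ℝ ρ) w) (a b : EuclideanSpace ℂ (Fin n)) :
    d2 ρ w a b = (fderiv ℝ (fderiv ℝ ρ) w) b a := by
  have : (fun x => fderiv ℝ ρ x a) = fun x => (fderiv ℝ ρ x) ((fun _ => a) x) := rfl
  rw [d2, this, fderiv_clm_apply hF (differentiableAt_const a)]
  simp

lemma d2_expand {n : ℕ} {ρ : EuclideanSpace ℂ (Fin n) → ℝ}
    {w : EuclideanSpace ℂ (Fin n)}
    (hF : DifferentiableAt ℝ (fderiv ℝ ρ) w) (a b : EuclideanSpace ℂ (Fin n)) :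
    d2 ρ w a b = ∑ j, ∑ k,
      ((a j).re * (b k).re * d2 ρ w (EuclideanSpace.single j 1) (EuclideanSpace.single k 1)
      + (a j).re * (b k).im * d2 ρ w (EuclideanSpace.single j 1) (EuclideanSpace.single k I)
      + (a j).im * (b k).re * d2 ρ w (EuclideanSpace.single j I) (EuclideanSpace.single k 1)
      + (a j).im * (b k).im * d2 ρ w (EuclideanSpace.single j I) (EuclideanSpace.single k I)) := by
  simp only [d2_eq hF]
  conv_lhs => rw [decomp a, decomp b]
  rw [map_sum]
  refine Finset.sum_congr rfl fun j _ => ?_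
  rw [map_sum, ContinuousLinearMap.sum_apply]
  refine Finset.sum_congr rfl fun k _ => ?_
  simp only [map_add, _root_.map_smul, ContinuousLinearMap.add_apply, ContinuousLinearMap.smul_apply,
    smul_eq_mul]
  ring

lemma key {n : ℕ} {ρ : EuclideanSpace ℂ (Fin n) → ℝ}
    {w : EuclideanSpace ℂ (Fin n)}
    (hF : DifferentiableAt ℝ (fderiv ℝ ρ) w) (v : EuclideanSpace ℂ (Fin n)) :
    d2 ρ w v v + d2 ρ w ((I:ℂ) • v) ((I:ℂ) • v) = 4 * levi ρ w v := by
  rw [d2_expand hF v v, d2_expand hF ((I:ℂ) • v) ((I:ℂ) • v), levi, Finset.mul_sum,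
    ← Finset.sum_add_distrib]
  refine Finset.sum_congr rfl fun j _ => ?_
  rw [Finset.mul_sum, ← Finset.sum_add_distrib]
  refine Finset.sum_congr rfl fun k _ => ?_
  have hj : ((I:ℂ) • v) j = I * v j := rfl
  have hk : ((I:ℂ) • v) k = I * v k := rfl
  rw [hj, hk]
  simp only [leviCoef, Complex.mul_re, Complex.mul_im, Complex.add_re, Complex.add_im,
    Complex.ofReal_re, Complex.ofReal_im, Complex.I_re, Complex.I_im, Complex.conj_re,
    Complex.conj_im, Complex.sub_re, Complex.sub_im]
  norm_num
  ring

lemma wpair_add {n : ℕ} (ρ : EuclideanSpace ℂ (Fin n) → ℝ) (w a b : EuclideanSpace ℂ (Fin n)) :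
    wpair ρ w (a + b) = wpair ρ w a + wpair ρ w b := by
  simp [wpair, mul_add, Finset.sum_add_distrib]

lemma wpair_neg {n : ℕ} (ρ : EuclideanSpace ℂ (Fin n) → ℝ) (w a : EuclideanSpace ℂ (Fin n)) :
    wpair ρ w (-a) = -wpair ρ w a := by
  simp [wpair]

lemma wpair_smulc {n : ℕ} (ρ : EuclideanSpace ℂ (Fin n) → ℝ) (w a : EuclideanSpace ℂ (Fin n))
    (c : ℂ) : wpair ρ w (c • a) = c * wpair ρ w a := by
  simp only [wpair, Finset.mul_sum, PiLp.smul_apply, smul_eq_mul]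
  exact Finset.sum_congr rfl fun j _ => by ring

lemma wpair_smulr {n : ℕ} (ρ : EuclideanSpace ℂ (Fin n) → ℝ) (w a : EuclideanSpace ℂ (Fin n))
    (r : ℝ) : wpair ρ w (r • a) = (r : ℂ) * wpair ρ w a := by
  simp only [wpair, Finset.mul_sum, PiLp.smul_apply, Complex.real_smul]
  exact Finset.sum_congr rfl fun j _ => by ring

lemma fderiv_eq_wpair {n : ℕ} (ρ : EuclideanSpace ℂ (Fin n) → ℝ) (w u : EuclideanSpace ℂ (Fin n)) :
    fderiv ℝ ρ w u = 2 * (wpair ρ w u).re := by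
  conv_lhs => rw [decomp u]
  rw [map_sum]
  simp only [map_add, _root_.map_smul, smul_eq_mul]
  rw [wpair, Complex.re_sum, Finset.mul_sum]
  refine Finset.sum_congr rfl fun j _ => ?_
  simp [wd, Complex.mul_re, Complex.mul_im]
  ring

set_option maxHeartbeats 2000000

/-- A bounded domain of class `C²` that is strongly ℂ-linearly convex is
strongly pseudoconvex. -/
theorem statement7 (n : ℕ) (D : Set (EuclideanSpace ℂ (Fin n)))
    (hDopen : IsOpen D) (hDbd : Bornology.IsBounded D)
    (ρ : EuclideanSpace ℂ (Fin n) → ℝ) (hρ : ContDiff ℝ 2 ρ)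
    (hdef : D = {z | ρ z < 0})
    (hgrad : ∀ w ∈ frontier D, fderiv ℝ ρ w ≠ 0)
    (hconv : ∃ c : ℝ, 0 < c ∧ ∀ w ∈ frontier D, ∀ z ∈ closure D,
      c * ‖w - z‖ ^ 2 ≤ ‖wpair ρ w (w - z)‖) :
    ∀ w ∈ frontier D, ∀ v : EuclideanSpace ℂ (Fin n),
      v ≠ 0 → wpair ρ w v = 0 → 0 < levi ρ w v := by
  obtain ⟨c, hc, hconv⟩ := hconv
  intro w hw v hv hvpair
  by_contra hL
  push_neg at hL
  have hFc : ContDiff ℝ 1 (fderiv ℝ ρ) := hρ.fderiv_right (by norm_num)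
  have hF : DifferentiableAt ℝ (fderiv ℝ ρ) w := (hFc.differentiable one_ne_zero).differentiableAt
  have hdiff : Differentiable ℝ ρ := hρ.differentiable (by norm_num)
  -- ρ w = 0
  have hw0 : ρ w = 0 := by
    have h1 : w ∈ closure D := frontier_subset_closure hw
    have h2 : w ∉ D := by
      rw [hDopen.frontier_eq] at hw; exact hw.2
    have hle : ρ w ≤ 0 := by
      have hsub : closure D ⊆ {z | ρ z ≤ 0} := by
        apply closure_minimal
        · rw [hdef]
          intro z hz
          simp only [Set.mem_setOf_eq] at hz ⊢
          exact le_of_lt hz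
        · exact isClosed_le hρ.continuous continuous_const
      exact hsub h1
    have hge : ¬ ρ w < 0 := by rw [hdef] at h2; exact h2
    linarith [not_lt.mp hge]
  -- choose tangent direction u with nonpositive second derivative
  have hkey := key hF v
  obtain ⟨u, hupair, hunorm, hud2⟩ :
      ∃ u, wpair ρ w u = 0 ∧ ‖u‖ = ‖v‖ ∧ d2 ρ w u u ≤ 0 := by
    rcases le_or_gt (d2 ρ w v v) 0 with h | h
    · exact ⟨v, hvpair, rfl, h⟩
    · refine ⟨(I : ℂ) • v, ?_, ?_, by linarith⟩
      · rw [wpair_smulc, hvpair, mul_zero]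
      · rw [norm_smul, norm_I, one_mul]
  -- the normal direction
  set ν : EuclideanSpace ℂ (Fin n) :=
    (WithLp.equiv 2 _).symm (fun j => -((starRingEnd ℂ) (wd ρ w j))) with hνdef
  have hν : ∀ j, ν j = -((starRingEnd ℂ) (wd ρ w j)) := fun j => rfl
  set M : ℝ := ∑ j, Complex.normSq (wd ρ w j) with hMdef
  have hwpairν : wpair ρ w ν = -(M : ℂ) := by
    simp only [wpair, hν, mul_neg, Complex.mul_conj, hMdef]
    push_cast
    simp
  have hM0 : 0 ≤ M := Finset.sum_nonneg fun j _ => Complex.normSq_nonneg _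
  have hM : 0 < M := by
    rcases hM0.lt_or_eq with h | h
    · exact h
    · exfalso
      apply hgrad w hw
      have hz : ∀ j, wd ρ w j = 0 := by
        intro j
        exact normSq_eq_zero.mp
          ((Finset.sum_eq_zero_iff_of_nonneg fun i _ => Complex.normSq_nonneg _).mp h.symm j
            (Finset.mem_univ j))
      apply ContinuousLinearMap.ext
      intro x
      rw [fderiv_eq_wpair]
      simp [wpair, hz]
  have hfν : fderiv ℝ ρ w ν = -(2 * M) := by
    rw [fderiv_eq_wpair, hwpairν]
    simp only [Complex.neg_re, Complex.ofReal_re]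
    ring
  have hvnorm : 0 < ‖v‖ := norm_pos_iff.mpr hv
  set ε : ℝ := c * ‖v‖ ^ 2 / (8 * M) with hεdef
  have hε : 0 < ε := by positivity
  set ν' : EuclideanSpace ℂ (Fin n) := ε • ν with hν'def
  -- the curve
  set γ : ℝ → EuclideanSpace ℂ (Fin n) := fun t => w + t • u + (t ^ 2) • ν' with hγdef
  set g : ℝ → ℝ := fun t => ρ (γ t) with hgdef
  set g1 : ℝ → ℝ := fun t => (fderiv ℝ ρ (γ t)) (u + (2 * t) • ν') with hg1def
  have hγ0 : γ 0 = w := by simp [hγdef]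
  have hγder : ∀ t, HasDerivAt γ (u + (2 * t) • ν') t := by
    intro t
    have h1 : HasDerivAt (fun s : ℝ => s • u) ((1 : ℝ) • u) t := (hasDerivAt_id t).smul_const u
    have h2 : HasDerivAt (fun s : ℝ => (s ^ 2) • ν') (((2 : ℕ) * t ^ 1 : ℝ) • ν') t :=
      (hasDerivAt_pow 2 t).smul_const ν'
    have h3 := (h1.add h2).const_add w
    have e1 : (fun x : ℝ => w + (x • u + x ^ 2 • ν')) = γ := by
      funext x
      simp only [hγdef]
      rw [add_assoc]
    have e2 : (1 : ℝ) • u + (((2 : ℕ) : ℝ) * t ^ 1) • ν' = u + (2 * t) • ν' := by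
      push_cast
      rw [one_smul, pow_one]
    simp only [Pi.add_apply] at h3
    rw [e1, e2] at h3
    exact h3
  have hgder : ∀ t, HasDerivAt g (g1 t) t := fun t =>
    (hdiff (γ t)).hasFDerivAt.comp_hasDerivAt t (hγder t)
  have hg1_0 : g1 0 = 0 := by
    simp only [hg1def, hγ0, mul_zero, zero_smul, add_zero]
    rw [fderiv_eq_wpair, hupair]
    simp
  -- second derivative at 0
  set K : ℝ := d2 ρ w u u - 4 * (ε * M) with hKdef
  have hK : HasDerivAt g1 K 0 := by
    have hd0 : HasDerivAt γ u 0 := by simpa using hγder 0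
    have hFat : HasFDerivAt (fderiv ℝ ρ) (fderiv ℝ (fderiv ℝ ρ) w) (γ 0) := by
      rw [hγ0]; exact hF.hasFDerivAt
    have hφ : HasDerivAt (fun t => fderiv ℝ ρ (γ t)) ((fderiv ℝ (fderiv ℝ ρ) w) u) 0 := by
      have := hFat.comp_hasDerivAt 0 hd0
      exact this
    have hψ : HasDerivAt (fun t : ℝ => u + (2 * t) • ν') ((2 : ℝ) • ν') 0 := by
      have h2t : HasDerivAt (fun t : ℝ => 2 * t) 2 0 := by
        simpa using (hasDerivAt_id (0 : ℝ)).const_mul 2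
      exact (h2t.smul_const ν').const_add u
    have h := hφ.clm_apply hψ
    refine h.congr_deriv (Eq.symm ?_)
    rw [hKdef]
    simp only [mul_zero, zero_smul, add_zero, hγ0]
    rw [← d2_eq hF u u, _root_.map_smul, smul_eq_mul, hν'def, _root_.map_smul, smul_eq_mul, hfν]
    ring
  have hKneg : K < 0 := by
    rw [hKdef]
    nlinarith [mul_pos hε hM]
  -- g1 is negative on a right neighborhood of 0
  have hg1neg : ∀ᶠ t in nhdsWithin (0 : ℝ) (Set.Ioi 0), g1 t < 0 := by
    have h1 : Filter.Tendsto (slope g1 0) (nhdsWithin (0 : ℝ) (Set.Ioi 0)) (nhds K) :=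
      (hasDerivAt_iff_tendsto_slope.mp hK).mono_left
        (nhdsWithin_mono 0 fun x hx => ne_of_gt hx)
    have h2 : ∀ᶠ t in nhdsWithin (0 : ℝ) (Set.Ioi 0), slope g1 0 t < 0 :=
      h1.eventually_lt_const hKneg
    filter_upwards [h2, self_mem_nhdsWithin] with t ht ht0
    rw [slope_def_field, hg1_0, sub_zero, sub_zero] at ht
    have ht0' : (0 : ℝ) < t := ht0
    have := mul_neg_of_neg_of_pos ht ht0'
    rwa [div_mul_cancel₀ _ (ne_of_gt ht0')] at this
  obtain ⟨δ, hδ0, hδ⟩ := mem_nhdsGT_iff_exists_Ioo_subset.mp hg1neg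
  have hδ0' : (0 : ℝ) < δ := hδ0
  -- choose t
  set t : ℝ := min (δ / 2) (‖v‖ / (2 * ε * ‖ν‖ + 1)) with htdef
  have ht0 : 0 < t := lt_min (by linarith) (by positivity)
  have htδ : t < δ := lt_of_le_of_lt (min_le_left _ _) (by linarith)
  have htb : ε * t * ‖ν‖ ≤ ‖v‖ / 2 := by
    have h4 : t ≤ ‖v‖ / (2 * ε * ‖ν‖ + 1) := min_le_right _ _
    have hP : (0:ℝ) < 2 * ε * ‖ν‖ + 1 := by positivity
    have h5 : t * (2 * ε * ‖ν‖ + 1) ≤ ‖v‖ := (le_div_iff₀ hP).mp h4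
    nlinarith [norm_nonneg ν, ht0]
  -- g t < 0 via the mean value theorem
  have hγcont : Continuous γ := by
    rw [hγdef]
    exact (continuous_const.add (continuous_id.smul continuous_const)).add
      ((continuous_id.pow 2).smul continuous_const)
  have hgcont : ContinuousOn g (Set.Icc 0 t) := by
    rw [hgdef]
    exact (hρ.continuous.comp hγcont).continuousOn
  obtain ⟨ξ, hξ, hξeq⟩ := exists_hasDerivAt_eq_slope g g1 ht0 hgcont fun x _ => hgder x
  have hg0 : g 0 = 0 := by simp [hgdef, hγ0, hw0]
  have hgt : g t < 0 := by
    have hneg : g1 ξ < 0 := hδ ⟨hξ.1, lt_trans hξ.2 htδ⟩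
    rw [hξeq, hg0, sub_zero, sub_zero] at hneg
    have := mul_neg_of_neg_of_pos hneg ht0
    rwa [div_mul_cancel₀ _ (ne_of_gt ht0)] at this
  -- γ t lies in D, hence in the closure
  have hzcl : γ t ∈ closure D := by
    apply subset_closure
    rw [hdef]
    exact hgt
  -- apply the convexity hypothesis
  have hcz := hconv w hw (γ t) hzcl
  have hwz : w - γ t = -(t • u) + -((t ^ 2) • ν') := by
    simp only [hγdef]
    abel
  have hwp : wpair ρ w (w - γ t) = ((t ^ 2 * (ε * M) : ℝ) : ℂ) := by
    rw [hwz, wpair_add, wpair_neg, wpair_neg, wpair_smulr, wpair_smulr, hupair, hν'def,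
      wpair_smulr, hwpairν]
    push_cast
    ring
  have habs : ‖wpair ρ w (w - γ t)‖ = t ^ 2 * (ε * M) := by
    rw [hwp, Complex.norm_real, Real.norm_eq_abs]
    exact abs_of_nonneg (by positivity)
  -- lower bound on the distance
  have hnorm1 : t * ‖v‖ / 2 ≤ ‖w - γ t‖ := by
    have h6 : ‖w - γ t‖ = ‖t • u + (t ^ 2) • ν'‖ := by
      rw [hwz, ← neg_add, norm_neg]
    have h7 : ‖t • u‖ - ‖(t ^ 2) • ν'‖ ≤ ‖t • u + (t ^ 2) • ν'‖ := by
      have := norm_sub_norm_le (t • u) (-((t ^ 2) • ν'))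
      simpa using this
    have e3 : ‖t • u‖ = t * ‖v‖ := by
      rw [norm_smul, hunorm, Real.norm_eq_abs, abs_of_pos ht0]
    have e4 : ‖(t ^ 2) • ν'‖ = t ^ 2 * (ε * ‖ν‖) := by
      rw [hν'def, norm_smul, norm_smul, Real.norm_eq_abs, Real.norm_eq_abs,
        _root_.abs_of_nonneg (sq_nonneg t), _root_.abs_of_pos hε]
    rw [h6]
    rw [e3, e4] at h7
    nlinarith [htb, ht0, mul_le_mul_of_nonneg_left htb (le_of_lt ht0)]
  -- contradiction
  rw [habs] at hcz
  have h8 : c * (t * ‖v‖ / 2) ^ 2 ≤ t ^ 2 * (ε * M) := by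
    refine le_trans ?_ hcz
    have := pow_le_pow_left₀ (by positivity) hnorm1 2
    nlinarith [norm_nonneg (w - γ t)]
  have hεM : ε * M = c * ‖v‖ ^ 2 / 8 := by
    rw [hεdef]
    field_simp
  rw [hεM] at h8
  nlinarith [mul_pos (mul_pos hc (pow_pos ht0 2)) (pow_pos hvnorm 2)]

end
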